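/- Let S be a Carathéodory independent set of a graph G with |S| ≥ 2 under Δ-convexity. Then the subgraph of G induced by S contains at least one edge. -/

import Mathlib

variable {V : Type*}

/-- `S` is Δ-convex: no vertex outside `S` is adjacent to two adjacent vertices of `S`. -/
def DeltaConvex (G : SimpleGraph V) (S : Set V) : Prop :=
  ∀ ⦃w u v : V⦄, u ∈ S → v ∈ S → G.Adj u v → G.Adj w u → G.Adj w v → w ∈ S

/-- The Δ-convex hull of `S`: the smallest Δ-convex set containing `S`. -/
def deltaHull (G : SimpleGraph V) (S : Set V) : Set V :=
  ⋂₀ {T : Set V | S ⊆ T ∧ DeltaConvex G T}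

/-- `S` is Carathéodory independent for Δ-convexity. -/
def CIndep [DecidableEq V] (G : SimpleGraph V) (S : Finset V) : Prop :=
  ∃ p ∈ deltaHull G ↑S, ∀ a ∈ S, p ∉ deltaHull G ↑(S.erase a)

/-- The Carathéodory number of `G` for Δ-convexity. -/
noncomputable def deltaCaratheodoryNumber [DecidableEq V] [Fintype V]
    (G : SimpleGraph V) : ℕ :=
  sSup {n : ℕ | ∃ S : Finset V, CIndep G S ∧ S.card = n}

lemma hull_of_edgefree (G : SimpleGraph V) (T : Set V)
    (h : ∀ u ∈ T, ∀ v ∈ T, ¬ G.Adj u v) : deltaHull G T = T := by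
  apply Set.Subset.antisymm
  · exact Set.sInter_subset_of_mem ⟨le_refl T, fun w u v hu hv huv _ _ => (h u hu v hv huv).elim⟩
  · exact fun x hx => Set.mem_sInter.mpr fun T' hT' => hT'.1 hx

theorem stmt_8 [Fintype V] [DecidableEq V] (G : SimpleGraph V) (S : Finset V)
    (hS : CIndep G S) (h2 : 2 ≤ S.card) :
    ∃ u ∈ S, ∃ v ∈ S, G.Adj u v := by
  by_contra hno
  push_neg at hno
  obtain ⟨p, hp, hp2⟩ := hS
  rw [hull_of_edgefree G (↑S : Set V) (fun u hu v hv => hno u hu v hv)] at hp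
  have hpS : p ∈ S := hp
  obtain ⟨a, haS, hap⟩ := Finset.exists_mem_ne h2 p
  apply hp2 a haS
  rw [hull_of_edgefree G (↑(S.erase a) : Set V) (fun u hu v hv =>
    hno u (Finset.mem_of_mem_erase hu) v (Finset.mem_of_mem_erase hv))]
  exact Finset.mem_coe.mpr (Finset.mem_erase.mpr ⟨fun h => hap h.symm, hpS⟩)
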